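/- In the SCOMARS chain with equal fair shares p_r = 1/G for the first group among G equal groups of size n (N = nG), conditional on S_{r-1} = 0 for r ≤ G, the probability of selection at stage r is 1/(G−r+1); conditional on S_{r-1} = 1 for r ≤ G, the probability of selection at stage r is 0; and P(W_G = 1 | S_{G-1} = 0) = 1. Hence within the first G stages the group selects exactly once, uniformly at random among the G positions. -/

import Mathlib

theorem scomars_uniform_first_selection (G : ℕ) (hG : 2 ≤ G)
    (q0 q1 : ℕ → ℝ)
    (hq0 : ∀ r : ℕ, q0 r
      = ((1 : ℝ) / G - max 0 ((0 : ℝ) - ((r : ℝ) - 1) / G))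
          / (1 - |(0 : ℝ) - ((r : ℝ) - 1) / G|))
    (hq1 : ∀ r : ℕ, q1 r
      = ((1 : ℝ) / G - max 0 ((1 : ℝ) - ((r : ℝ) - 1) / G))
          / (1 - |(1 : ℝ) - ((r : ℝ) - 1) / G|))
    (selProb : ℝ → ℝ) (hsel : ∀ x, selProb x = max 0 (min 1 x)) :
    (∀ r : ℕ, 1 ≤ r → r ≤ G → selProb (q0 r) = 1 / ((G : ℝ) - r + 1))
    ∧ (∀ r : ℕ, 2 ≤ r → r ≤ G → selProb (q1 r) = 0)
    ∧ selProb (q0 G) = 1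
    ∧ (∀ r : ℕ, 1 ≤ r → r ≤ G →
        (∏ j ∈ Finset.Icc 1 (r - 1), (1 - selProb (q0 j))) * selProb (q0 r)
          = 1 / G) := by
  have hG2 : (2:ℝ) ≤ (G:ℝ) := by exact_mod_cast hG
  have hGpos : (0:ℝ) < (G:ℝ) := by linarith
  have hGne : (G:ℝ) ≠ 0 := ne_of_gt hGpos
  have key : ∀ r : ℕ, 1 ≤ r → r ≤ G → selProb (q0 r) = 1 / ((G : ℝ) - r + 1) := by
    intro r h1 h2
    have hr1 : (1:ℝ) ≤ (r:ℝ) := by exact_mod_cast h1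
    have hrG : (r:ℝ) ≤ (G:ℝ) := by exact_mod_cast h2
    have ht0 : (0:ℝ) ≤ ((r:ℝ) - 1)/G := div_nonneg (by linarith) hGpos.le
    have hd : (0:ℝ) < (G:ℝ) - r + 1 := by linarith
    have hdne : (G:ℝ) - r + 1 ≠ 0 := ne_of_gt hd
    have hq : q0 r = 1 / ((G:ℝ) - r + 1) := by
      rw [hq0]
      have e1 : (0:ℝ) - ((r:ℝ) - 1)/G = -(((r:ℝ) - 1)/G) := by ring
      rw [e1, max_eq_left (neg_nonpos.mpr ht0), abs_neg, abs_of_nonneg ht0, sub_zero]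
      have h1m : 1 - ((r:ℝ) - 1)/G ≠ 0 := by
        have : 1 - ((r:ℝ) - 1)/G = ((G:ℝ) - r + 1)/G := by field_simp; ring
        rw [this]; exact div_ne_zero hdne hGne
      rw [div_eq_div_iff h1m hdne]
      field_simp
      ring
    rw [hsel, hq]
    have hle : 1/((G:ℝ) - r + 1) ≤ 1 := by rw [div_le_one hd]; linarith
    have hpos : (0:ℝ) < 1/((G:ℝ) - r + 1) := by positivity
    rw [min_eq_right hle, max_eq_right hpos.le]
  refine ⟨key, ?_, ?_, ?_⟩
  · intro r h2r hrG
    have hr2 : (2:ℝ) ≤ (r:ℝ) := by exact_mod_cast h2r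
    have hrGr : (r:ℝ) ≤ (G:ℝ) := by exact_mod_cast hrG
    have ht0 : (0:ℝ) ≤ 1 - ((r:ℝ) - 1)/G := by
      rw [sub_nonneg, div_le_one hGpos]; linarith
    have hq : q1 r = ((r:ℝ) - G)/((r:ℝ) - 1) := by
      rw [hq1, max_eq_right ht0, abs_of_nonneg ht0]
      have hden : 1 - (1 - ((r:ℝ) - 1)/G) = ((r:ℝ) - 1)/G := by ring
      have hr1ne : (r:ℝ) - 1 ≠ 0 := by norm_num; nlinarith
      rw [hden]
      field_simp
      ring
    have hq1le : q1 r ≤ 0 := by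
      rw [hq]
      apply div_nonpos_of_nonpos_of_nonneg <;> linarith
    rw [hsel]
    have : min 1 (q1 r) ≤ 0 := le_trans (min_le_right _ _) hq1le
    exact max_eq_left this
  · have := key G (by omega) le_rfl
    rw [this]
    norm_num
  · have prodlem : ∀ r : ℕ, 1 ≤ r → r ≤ G →
        (∏ j ∈ Finset.Icc 1 (r - 1), (1 - selProb (q0 j))) = ((G:ℝ) - r + 1)/G := by
      intro r
      induction r with
      | zero => intro h; omega
      | succ n ih =>
        intro _ hle
        match n, ih, hle with
        | 0, _, _ =>
          simp [Finset.Icc_self]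
          field_simp
        | m + 1, ih, hle =>
          have hm1G : m + 1 ≤ G := by omega
          have ihv := ih (by omega) hm1G
          have hstep : (∏ j ∈ Finset.Icc 1 (m + 1), (1 - selProb (q0 j)))
              = (∏ j ∈ Finset.Icc 1 m, (1 - selProb (q0 j))) * (1 - selProb (q0 (m+1))) := by
            rw [Finset.prod_Icc_succ_top (by omega)]
          have hsp := key (m+1) (by omega) hm1G
          push_cast at hsp
          have hmG : ((m:ℝ) + 1) ≤ (G:ℝ) := by exact_mod_cast hm1G
          have hdpos : (0:ℝ) < (G:ℝ) - (m+1) + 1 := by push_cast; linarith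
          have hdne : (G:ℝ) - ((m:ℝ)+1) + 1 ≠ 0 := by linarith
          simp only [Nat.add_sub_cancel] at ihv ⊢
          rw [hstep, ihv, hsp]
          push_cast at hdne ⊢
          field_simp
          ring
    intro r h1 h2
    rw [prodlem r h1 h2, key r h1 h2]
    have hr : (r:ℝ) ≤ (G:ℝ) := by exact_mod_cast h2
    have hdne : (G:ℝ) - r + 1 ≠ 0 := by
      have h1' : (1:ℝ) ≤ (r:ℝ) := by exact_mod_cast h1
      nlinarith
    field_simp
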